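/- Let β ∈ ℚ[[t]] satisfy β = 1 − t·β² (such a power series exists, is unique, and has constant term 1; it is the Euler-characteristic specialization of the Donaldson–Thomas series of the 2-loop quiver). Then 2·t·β'(t) = β(t) · Σ_{n≥1} (−1)^n·binom(2n, n)·t^n in ℚ[[t]], where β' denotes the formal derivative of β and binom(2n, n) is the central binomial coefficient. (Equivalently, t·(log β)' = (1/2)((1+4t)^{−1/2} − 1), which underlies the computation of the numerical DT invariants Ω^{(2)}_d of the 2-loop quiver.) -/

import Mathlib

open PowerSeries

private noncomputable def twoLoopS : PowerSeries ℚ :=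
  PowerSeries.mk (fun n => if n = 0 then 0 else ((-1) ^ n * (Nat.choose (2 * n) n) : ℚ))

private lemma twoLoop_coeff_dF (f : PowerSeries ℚ) (n : ℕ) :
    coeff n (derivativeFun f) = coeff (n + 1) f * (n + 1) := coeff_derivative f n

private lemma twoLoop_dX : derivativeFun (X : PowerSeries ℚ) = 1 := by
  ext n
  rw [twoLoop_coeff_dF]
  cases n <;> simp [coeff_X, coeff_one]

private lemma twoLoop_cb (n : ℕ) :
    ((n : ℚ) + 2) * (Nat.choose (2 * (n + 2)) (n + 2)) =
      (2 * ((2 * n + 2) + 1)) * (Nat.choose (2 * (n + 1)) (n + 1)) := by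
  have h := Nat.succ_mul_centralBinom_succ (n + 1)
  have h2 : ((n + 1 + 1) * Nat.centralBinom (n + 1 + 1) : ℚ)
      = ((2 * (2 * (n + 1) + 1) * Nat.centralBinom (n + 1) : ℕ) : ℚ) := by
    exact_mod_cast congrArg (Nat.cast : ℕ → ℚ) h
  unfold Nat.centralBinom at h2
  push_cast at h2 ⊢
  ring_nf at h2 ⊢
  linarith [h2]

private lemma twoLoopS_ode :
    (1 + 4 * X) * derivativeFun twoLoopS = -2 * (1 + twoLoopS) := by
  have expand : (1 + 4 * X) * derivativeFun twoLoopS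
      = derivativeFun twoLoopS + 4 * (X * derivativeFun twoLoopS) := by ring
  rw [expand]
  ext n
  rw [map_add, twoLoop_coeff_dF]
  cases n with
  | zero =>
      simp only [coeff_zero_eq_constantCoeff, map_mul, constantCoeff_X, map_neg,
        map_one, map_add, map_ofNat]
      simp [twoLoopS, coeff_mk, constantCoeff_X]
  | succ n =>
      rw [show ((4 : PowerSeries ℚ) * (X * derivativeFun twoLoopS))
            = X * (4 * derivativeFun twoLoopS) by ring,
        coeff_succ_X_mul,
        (map_ofNat (PowerSeries.C (R := ℚ)) 4).symm, coeff_C_mul,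
        twoLoop_coeff_dF,
        show (-2 : PowerSeries ℚ) * (1 + twoLoopS)
          = PowerSeries.C (-2) * (1 + twoLoopS) by
            rw [map_neg, map_ofNat],
        coeff_C_mul, map_add, coeff_one]
      simp only [twoLoopS, coeff_mk, Nat.succ_ne_zero, if_false, Nat.add_eq_zero,
        and_false, ite_false]
      have e : n + 1 + 1 = n + 2 := rfl
      rw [e]
      have hcb := twoLoop_cb n
      push_cast at hcb ⊢
      linear_combination ((-1 : ℚ)^n) * hcb

theorem two_loop_logderivative (β : PowerSeries ℚ)
    (hβ : β = 1 - PowerSeries.X * β ^ 2) :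
    2 * PowerSeries.X * PowerSeries.derivativeFun β =
      β * PowerSeries.mk
        (fun n => if n = 0 then 0 else ((-1) ^ n * (Nat.choose (2 * n) n) : ℚ)) := by
  show 2 * X * derivativeFun β = β * twoLoopS
  have hXβ2 : X * β ^ 2 = 1 - β := by linear_combination hβ
  have hu2 : (1 + 2 * X * β) ^ 2 = 1 + 4 * X := by linear_combination (4 * X) * hXβ2
  -- derivative of the defining relation
  have hβ' : (1 + 2 * X * β) * derivativeFun β = -β ^ 2 := by
    have h1 : β + X * (β * β) = 1 := by linear_combination hβ
    have h := congrArg derivativeFun h1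
    rw [derivativeFun_add, derivativeFun_mul, derivativeFun_mul, derivativeFun_one,
      twoLoop_dX] at h
    simp only [smul_eq_mul] at h
    linear_combination h
  -- derivative of 1 + 4X
  have d14 : derivativeFun ((1 : PowerSeries ℚ) + 4 * X) = 4 := by
    ext n
    rw [twoLoop_coeff_dF]
    cases n <;>
      simp [coeff_X, coeff_one, show (4 : PowerSeries ℚ) = PowerSeries.C 4
        from (map_ofNat _ 4).symm, coeff_C]
  -- derivative of w² = 1 + 4X
  have h2' : 2 * ((1 + 2 * X * β) * derivativeFun (1 + 2 * X * β)) = 4 := by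
    have h := congrArg derivativeFun hu2
    rw [pow_two, derivativeFun_mul, d14] at h
    simp only [smul_eq_mul] at h
    linear_combination h
  have hdV : derivativeFun ((1 : PowerSeries ℚ) + twoLoopS) = derivativeFun twoLoopS := by
    rw [derivativeFun_add, derivativeFun_one, zero_add]
  -- the product w · (1 + S) has zero derivative
  have hDwV : derivativeFun ((1 + 2 * X * β) * (1 + twoLoopS)) = 0 := by
    have h3 : (2 * (1 + 4 * X)) *
        derivativeFun ((1 + 2 * X * β) * (1 + twoLoopS)) = 0 := by
      rw [derivativeFun_mul, hdV]
      simp only [smul_eq_mul]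
      linear_combination (2 * (1 + 2 * X * β)) * twoLoopS_ode
        + ((1 + 2 * X * β) * (1 + twoLoopS)) * h2'
        + (-2 * (1 + twoLoopS) * derivativeFun (1 + 2 * X * β)) * hu2
    have hne : (2 * (1 + 4 * X) : PowerSeries ℚ) ≠ 0 := by
      intro hc
      have := congrArg (constantCoeff) hc
      simp only [map_mul, map_add, map_one, map_ofNat, constantCoeff_X,
        map_zero] at this
      norm_num at this
    exact (mul_eq_zero.mp h3).resolve_left hne
  -- hence w · (1 + S) = 1
  have huV : (1 + 2 * X * β) * (1 + twoLoopS) = 1 := by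
    ext n
    cases n with
    | zero =>
        simp [twoLoopS, map_mul, map_add, constantCoeff_X]
    | succ n =>
        have h := congrArg (PowerSeries.coeff n) hDwV
        rw [twoLoop_coeff_dF, map_zero] at h
        have hn : ((n : ℚ) + 1) ≠ 0 := by positivity
        have h0 : PowerSeries.coeff (n + 1)
            ((1 + 2 * X * β) * (1 + twoLoopS)) = 0 := by
          rcases mul_eq_zero.mp h with h' | h'
          · exact h'
          · exact absurd h' hn
        rw [h0, coeff_one, if_neg (Nat.succ_ne_zero n)]
  have hwne : (1 + 2 * X * β : PowerSeries ℚ) ≠ 0 := left_ne_zero_of_mul_eq_one huV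
  have key : (2 * X * derivativeFun β) * (1 + 2 * X * β)
      = (β * twoLoopS) * (1 + 2 * X * β) := by
    linear_combination (2 * X) * hβ' - β * huV
  exact mul_right_cancel₀ hwne key
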